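/- arXiv:0904.0696 — 5 statements merged into one kernel-verified Lean document; each statement's English description precedes it below -/
import Mathlib

section
/- The limiting pressure of the Mallows model is p(β) = ∫_0^1 ln((1 − e^{−βx})/(βx)) dx; that is, lim_{n→∞} (1/n) ln([n]_{q_n}!/n!) = ∫_0^1 ln((1 − e^{−βx})/(βx)) dx where q_n = e^{−β/(n−1)} and β > 0. -/
open Filter Real

/-- `H x = log ((1 - e^{-x})/x)`. -/
noncomputable def Hfun : ℝ → ℝ := fun x => Real.log ((1 - Real.exp (-x)) / x)

lemma Hfun_zero : Hfun 0 = 0 := by simp [Hfun]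

lemma exp_neg_lt_one {x : ℝ} (hx : 0 < x) : Real.exp (-x) < 1 :=
  Real.exp_lt_one_iff.mpr (by linarith)

lemma one_sub_exp_pos {x : ℝ} (hx : 0 < x) : 0 < 1 - Real.exp (-x) := by
  linarith [exp_neg_lt_one hx]

lemma Hfun_eq {x : ℝ} (hx : 0 < x) :
    Hfun x = Real.log (1 - Real.exp (-x)) - Real.log x :=
  Real.log_div (one_sub_exp_pos hx).ne' hx.ne'

lemma Hfun_hasDerivAt {x : ℝ} (hx : 0 < x) :
    HasDerivAt Hfun (Real.exp (-x) / (1 - Real.exp (-x)) - 1 / x) x := by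
  have h1 : HasDerivAt (fun y : ℝ => Real.exp (-y)) (-Real.exp (-x)) x := by
    simpa [Function.comp_def] using (Real.hasDerivAt_exp (-x)).comp x (hasDerivAt_neg x)
  have h2 : HasDerivAt (fun y : ℝ => 1 - Real.exp (-y)) (Real.exp (-x)) x := by
    simpa [Pi.sub_def] using (hasDerivAt_const x (1:ℝ)).sub h1
  have h3 : HasDerivAt (fun y : ℝ => Real.log (1 - Real.exp (-y)))
      (Real.exp (-x) / (1 - Real.exp (-x))) x := h2.log (one_sub_exp_pos hx).ne'
  have h4 : HasDerivAt (fun y : ℝ => Real.log (1 - Real.exp (-y)) - Real.log y)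
      (Real.exp (-x) / (1 - Real.exp (-x)) - 1 / x) x := by
    simpa [one_div, Pi.sub_def] using h3.sub (Real.hasDerivAt_log hx.ne')
  refine h4.congr_of_eventuallyEq ?_
  filter_upwards [Ioi_mem_nhds hx] with y hy
  exact Hfun_eq hy

lemma Hfun_deriv_nonpos {x : ℝ} (hx : 0 < x) :
    Real.exp (-x) / (1 - Real.exp (-x)) - 1 / x ≤ 0 := by
  have h := Real.add_one_le_exp x
  have hpos := one_sub_exp_pos hx
  have hexp : (0:ℝ) < Real.exp (-x) := Real.exp_pos _
  rw [sub_nonpos, div_le_div_iff₀ hpos hx]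
  have key : (0:ℝ) ≤ (Real.exp x - (x+1)) * Real.exp (-x) :=
    mul_nonneg (by linarith) hexp.le
  have he : Real.exp x * Real.exp (-x) = 1 := by rw [← Real.exp_add]; simp
  nlinarith

lemma Hfun_tendsto_zero : Tendsto Hfun (nhdsWithin 0 (Set.Ioi 0)) (nhds 0) := by
  have h2 : HasDerivAt (fun y : ℝ => 1 - Real.exp (-y)) 1 0 := by
    have h1 : HasDerivAt (fun y : ℝ => Real.exp (-y)) (-Real.exp (-0:ℝ)) 0 := by
      simpa [Function.comp_def] using (Real.hasDerivAt_exp (-0:ℝ)).comp 0 (hasDerivAt_neg (0:ℝ))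
    simpa [Pi.sub_def] using (hasDerivAt_const (0:ℝ) (1:ℝ)).sub h1
  have hslope := hasDerivAt_iff_tendsto_slope.1 h2
  have harg : Tendsto (fun x : ℝ => (1 - Real.exp (-x)) / x)
      (nhdsWithin 0 (Set.Ioi 0)) (nhds 1) := by
    refine (hslope.mono_left (nhdsWithin_mono _ ?_)).congr ?_
    · intro x hx
      simpa using (Set.mem_Ioi.1 hx).ne'
    · intro x
      simp [slope_def_field]
  have hlog : Tendsto Real.log (nhds 1) (nhds 0) := by
    simpa using (Real.continuousAt_log one_ne_zero).tendsto
  exact hlog.comp harg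

lemma Hfun_contOn : ContinuousOn Hfun (Set.Ici 0) := by
  intro x hx
  rcases eq_or_lt_of_le (Set.mem_Ici.1 hx) with h | h
  · subst h
    rw [← continuousWithinAt_diff_self, Set.Ici_sdiff_left]
    show Tendsto Hfun (nhdsWithin 0 (Set.Ioi 0)) (nhds (Hfun 0))
    rw [Hfun_zero]
    exact Hfun_tendsto_zero
  · have h1 : (1 - Real.exp (-x)) / x ≠ 0 := (div_pos (one_sub_exp_pos h) h).ne'
    have harg : ContinuousAt (fun y : ℝ => (1 - Real.exp (-y)) / y) x :=
      ContinuousAt.div (by fun_prop) (by fun_prop) h.ne'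
    exact (harg.log h1).continuousWithinAt

lemma Hfun_anti : AntitoneOn Hfun (Set.Ici 0) := by
  apply antitoneOn_of_deriv_nonpos (convex_Ici 0) Hfun_contOn
  · intro x hx
    rw [interior_Ici] at hx
    exact (Hfun_hasDerivAt hx).differentiableAt.differentiableWithinAt
  · intro x hx
    rw [interior_Ici] at hx
    rw [(Hfun_hasDerivAt hx).deriv]
    exact Hfun_deriv_nonpos hx

lemma riemann_antitone (f : ℝ → ℝ)
    (hanti : AntitoneOn f (Set.Ici 0)) (hf0 : f 0 = 0) :
    Tendsto (fun m : ℕ => (1/(m:ℝ)) * ∑ i ∈ Finset.Icc 1 m, f ((i:ℝ)/(m:ℝ)))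
      atTop (nhds (∫ x in (0:ℝ)..1, f x)) := by
  set I := ∫ x in (0:ℝ)..1, f x with hIdef
  have key : ∀ m : ℕ, 1 ≤ m →
      (m:ℝ) * I + f 1 ≤ (∑ i ∈ Finset.Icc 1 m, f ((i:ℝ)/(m:ℝ)))
      ∧ (∑ i ∈ Finset.Icc 1 m, f ((i:ℝ)/(m:ℝ))) ≤ (m:ℝ) * I := by
    intro m hm
    have hm0 : (0:ℝ) < (m:ℝ) := by exact_mod_cast hm
    have hfm_anti : AntitoneOn (fun x => f (x / (m:ℝ))) (Set.Icc (0:ℝ) (0 + (m:ℕ))) := by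
      intro a ha b hb hab
      exact hanti (Set.mem_Ici.2 (div_nonneg ha.1 hm0.le))
        (Set.mem_Ici.2 (div_nonneg hb.1 hm0.le)) (by gcongr)
    have hint : (∫ x in (0:ℝ)..(0 + (m:ℕ)), f (x / (m:ℝ))) = (m:ℝ) * I := by
      rw [zero_add, intervalIntegral.integral_comp_div f hm0.ne']
      rw [zero_div, div_self hm0.ne']
      simp [hIdef]
    have hupper := hfm_anti.integral_le_sum
    have hlower := hfm_anti.sum_le_integral
    rw [hint] at hupper hlower
    have hsum1 : (∑ i ∈ Finset.range m, f ((0 + ((i:ℕ)+1:ℕ):ℝ) / (m:ℝ)))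
        = ∑ i ∈ Finset.Icc 1 m, f ((i:ℝ)/(m:ℝ)) := by
      rw [← Finset.Ico_add_one_right_eq_Icc, Finset.sum_Ico_eq_sum_range]
      refine Finset.sum_congr (by simp) fun i _ => ?_
      push_cast
      ring_nf
    have hsum2 : (∑ i ∈ Finset.range m, f ((0 + (i:ℕ):ℝ) / (m:ℝ)))
        = ∑ i ∈ Finset.Icc 1 m, f ((i:ℝ)/(m:ℝ)) - f 1 := by
      have h1 : (∑ i ∈ Finset.range (m+1), f (((i:ℕ):ℝ) / (m:ℝ)))
          = f 0 + ∑ i ∈ Finset.Ico 1 (m+1), f (((i:ℕ):ℝ) / (m:ℝ)) := by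
        rw [Finset.range_eq_Ico, Finset.sum_eq_sum_Ico_succ_bot (Nat.succ_pos m)]
        simp
      rw [Finset.sum_range_succ] at h1
      rw [Finset.Ico_add_one_right_eq_Icc] at h1
      have : f (((m:ℕ):ℝ)/(m:ℝ)) = f 1 := by rw [div_self hm0.ne']
      simp only [zero_add]
      rw [hf0] at h1
      linarith [h1, this]
    rw [hsum1] at hlower
    rw [hsum2] at hupper
    exact ⟨by linarith, hlower⟩
  have hlow : Tendsto (fun m : ℕ => I + f 1 * (1/(m:ℝ))) atTop (nhds I) := by
    have := tendsto_one_div_atTop_nhds_zero_nat (𝕜 := ℝ)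
    have h2 : Tendsto (fun m : ℕ => f 1 * (1/(m:ℝ))) atTop (nhds 0) := by
      simpa using this.const_mul (f 1)
    simpa using tendsto_const_nhds.add h2
  refine tendsto_of_tendsto_of_tendsto_of_le_of_le' hlow tendsto_const_nhds ?_ ?_
  · filter_upwards [eventually_ge_atTop 1] with m hm
    have hm0 : (0:ℝ) < (m:ℝ) := by exact_mod_cast hm
    have h2 : (1/(m:ℝ)) * ((m:ℝ) * I + f 1) ≤
        (1/(m:ℝ)) * ∑ i ∈ Finset.Icc 1 m, f ((i:ℝ)/(m:ℝ)) :=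
      mul_le_mul_of_nonneg_left (key m hm).1 (by positivity)
    have h3 : (1/(m:ℝ)) * ((m:ℝ) * I + f 1) = I + f 1 * (1/(m:ℝ)) := by
      field_simp
    linarith
  · filter_upwards [eventually_ge_atTop 1] with m hm
    have hm0 : (0:ℝ) < (m:ℝ) := by exact_mod_cast hm
    have h2 : (1/(m:ℝ)) * ∑ i ∈ Finset.Icc 1 m, f ((i:ℝ)/(m:ℝ)) ≤
        (1/(m:ℝ)) * ((m:ℝ) * I) :=
      mul_le_mul_of_nonneg_left (key m hm).2 (by positivity)
    have h3 : (1/(m:ℝ)) * ((m:ℝ) * I) = I := by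
      field_simp
    linarith

noncomputable def gfun (β : ℝ) : ℝ → ℝ := fun x => Real.log ((1 - Real.exp (-β * x)) / (β * x))

lemma gfun_eq (β x : ℝ) : gfun β x = Hfun (β * x) := by simp [gfun, Hfun, neg_mul]

lemma gfun_zero (β : ℝ) : gfun β 0 = 0 := by simp [gfun]

lemma gfun_anti {β : ℝ} (hβ : 0 < β) : AntitoneOn (gfun β) (Set.Ici 0) := by
  intro a ha b hb hab
  rw [gfun_eq, gfun_eq]
  exact Hfun_anti (Set.mem_Ici.2 (mul_nonneg hβ.le ha)) (Set.mem_Ici.2 (mul_nonneg hβ.le hb))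
    (by gcongr)

lemma gfun_contAt_one {β : ℝ} (hβ : 0 < β) : ContinuousAt (gfun β) 1 := by
  have h1 : ContinuousAt Hfun (β * 1) := by
    have := (Hfun_hasDerivAt (by simpa using hβ)).differentiableAt.continuousAt
    simpa using this
  have h2 : ContinuousAt (fun x : ℝ => β * x) 1 := by fun_prop
  exact (h1.comp h2).congr (by filter_upwards with x; exact (gfun_eq β x).symm)

lemma hsub_atTop : Tendsto (fun n : ℕ => (n:ℝ) - 1) atTop atTop := by
  simpa [sub_eq_add_neg] using
    tendsto_atTop_add_const_right atTop (-1 : ℝ) tendsto_natCast_atTop_atTop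

/-- Tendsto of the boundary/constant term. -/
lemma aux_B {β : ℝ} (hβ : 0 < β) :
    Tendsto (fun n : ℕ => -Hfun (β / ((n:ℝ) - 1))) atTop (nhds 0) := by
  have h1 : Tendsto (fun n : ℕ => β / ((n:ℝ) - 1)) atTop (nhdsWithin 0 (Set.Ioi 0)) := by
    rw [tendsto_nhdsWithin_iff]
    constructor
    · simpa [div_eq_mul_inv] using hsub_atTop.inv_tendsto_atTop.const_mul β
    · filter_upwards [eventually_ge_atTop 2] with n hn
      have : (2:ℝ) ≤ (n:ℝ) := by exact_mod_cast hn
      exact Set.mem_Ioi.2 (div_pos hβ (by linarith))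
  simpa using (Hfun_tendsto_zero.comp h1).neg

/-- Tendsto of the Riemann-sum term. -/
lemma aux_A {β : ℝ} (hβ : 0 < β) :
    Tendsto (fun n : ℕ => (1/(n:ℝ)) * ∑ i ∈ Finset.Icc 1 n, gfun β ((i:ℝ)/((n:ℝ) - 1)))
      atTop (nhds (∫ x in (0:ℝ)..1, gfun β x)) := by
  set I := ∫ x in (0:ℝ)..1, gfun β x with hI
  have hS := riemann_antitone (gfun β) (gfun_anti hβ) (gfun_zero β)
  set S : ℕ → ℝ := fun m => (1/(m:ℝ)) * ∑ i ∈ Finset.Icc 1 m, gfun β ((i:ℝ)/(m:ℝ)) with hSdef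
  have hT1 : Tendsto (fun n : ℕ => ((n:ℝ)-1)/(n:ℝ)) atTop (nhds 1) := by
    have h1 : Tendsto (fun n : ℕ => 1 - 1/(n:ℝ)) atTop (nhds 1) := by
      simpa using tendsto_const_nhds.sub (tendsto_one_div_atTop_nhds_zero_nat (𝕜 := ℝ))
    refine h1.congr' ?_
    filter_upwards [eventually_ge_atTop 1] with n hn
    have hn0 : (n:ℝ) ≠ 0 := Nat.cast_ne_zero.2 (by omega)
    field_simp
  have hT2 : Tendsto (fun n : ℕ => S (n-1)) atTop (nhds I) := hS.comp (tendsto_sub_atTop_nat 1)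
  have hT4 : Tendsto (fun n : ℕ => gfun β ((n:ℝ)/((n:ℝ)-1))) atTop (nhds (gfun β 1)) := by
    have harg : Tendsto (fun n : ℕ => (n:ℝ)/((n:ℝ)-1)) atTop (nhds 1) := by
      have h1 : Tendsto (fun n : ℕ => 1 + 1/((n:ℝ)-1)) atTop (nhds 1) := by
        have := hsub_atTop.inv_tendsto_atTop
        simpa [one_div] using tendsto_const_nhds.add this
      refine h1.congr' ?_
      filter_upwards [eventually_ge_atTop 2] with n hn
      have h2 : (2:ℝ) ≤ (n:ℝ) := by exact_mod_cast hn
      have hne : (n:ℝ) - 1 ≠ 0 := by linarith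
      field_simp
      ring
    exact ((gfun_contAt_one hβ).tendsto).comp harg
  have hform : Tendsto (fun n : ℕ =>
      (((n:ℝ)-1)/(n:ℝ)) * S (n-1) + (1/(n:ℝ)) * gfun β ((n:ℝ)/((n:ℝ)-1)))
      atTop (nhds I) := by
    have := (hT1.mul hT2).add (tendsto_one_div_atTop_nhds_zero_nat.mul hT4)
    simpa using this
  refine hform.congr' ?_
  filter_upwards [eventually_ge_atTop 2] with n hn
  obtain ⟨m, rfl⟩ : ∃ m, n = m + 1 := ⟨n - 1, by omega⟩
  have hm1 : 1 ≤ m := by omega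
  have hm0 : ((m:ℝ)) ≠ 0 := Nat.cast_ne_zero.2 (by omega)
  have hcast : ((m+1:ℕ):ℝ) - 1 = (m:ℝ) := by push_cast; ring
  have hsub : m + 1 - 1 = m := by omega
  rw [hsub, hcast]
  rw [Finset.sum_Icc_succ_top (by omega : 1 ≤ m + 1)]
  rw [hSdef]
  push_cast
  field_simp

lemma decomp {β : ℝ} (hβ : 0 < β) (n : ℕ) (hn : 2 ≤ n) :
    (1 / (n : ℝ)) * Real.log
        ((∏ i ∈ Finset.Icc 1 n,
          ((Real.exp (-β / ((n : ℝ) - 1))) ^ i - 1)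
            / (Real.exp (-β / ((n : ℝ) - 1)) - 1)) / (Nat.factorial n : ℝ))
      = (1/(n:ℝ)) * ∑ i ∈ Finset.Icc 1 n, gfun β ((i:ℝ)/((n:ℝ) - 1))
        + (-Hfun (β / ((n:ℝ) - 1))) := by
  have h2 : (2:ℝ) ≤ (n:ℝ) := by exact_mod_cast hn
  set s : ℝ := β / ((n:ℝ) - 1) with hsdef
  have hs : 0 < s := div_pos hβ (by linarith)
  set q : ℝ := Real.exp (-s) with hqdef
  have hq1 : q < 1 := exp_neg_lt_one hs
  have hq0 : 0 < q := Real.exp_pos _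
  have hneg : -β / ((n:ℝ) - 1) = -s := by rw [hsdef]; ring
  -- factorial as product
  have hfact : (Nat.factorial n : ℝ) = ∏ i ∈ Finset.Icc 1 n, (i:ℝ) := by
    rw [← Nat.cast_prod]
    congr 1
    rw [← Finset.prod_range_add_one_eq_factorial, ← Finset.Ico_add_one_right_eq_Icc,
      Finset.prod_Ico_eq_prod_range]
    simp [add_comm]
  have hterm_pos : ∀ i ∈ Finset.Icc 1 n, 0 < (q ^ i - 1) / ((q - 1) * (i:ℝ)) := by
    intro i hi
    have hi1 : 1 ≤ i := (Finset.mem_Icc.1 hi).1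
    have hipos : (0:ℝ) < (i:ℝ) := by exact_mod_cast hi1
    have hqi : q ^ i < 1 := pow_lt_one₀ hq0.le hq1 (by omega)
    apply div_pos_of_neg_of_neg
    · linarith
    · have : q - 1 < 0 := by linarith
      exact mul_neg_of_neg_of_pos this hipos
  -- rewrite the big quotient as a product
  have hP : (∏ i ∈ Finset.Icc 1 n, (q ^ i - 1) / (q - 1)) / (Nat.factorial n : ℝ)
      = ∏ i ∈ Finset.Icc 1 n, (q ^ i - 1) / ((q - 1) * (i:ℝ)) := by
    rw [hfact, ← Finset.prod_div_distrib]
    exact Finset.prod_congr rfl fun i _ => by rw [div_div]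
  have hlog : Real.log ((∏ i ∈ Finset.Icc 1 n, (q ^ i - 1) / (q - 1)) / (Nat.factorial n : ℝ))
      = ∑ i ∈ Finset.Icc 1 n, Real.log ((q ^ i - 1) / ((q - 1) * (i:ℝ))) := by
    rw [hP]
    exact Real.log_prod fun i hi => (hterm_pos i hi).ne'
  have hterm : ∀ i ∈ Finset.Icc 1 n,
      Real.log ((q ^ i - 1) / ((q - 1) * (i:ℝ)))
        = gfun β ((i:ℝ)/((n:ℝ) - 1)) + (Real.log s - Real.log (1 - Real.exp (-s))) := by
    intro i hi
    have hi1 : 1 ≤ i := (Finset.mem_Icc.1 hi).1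
    have hipos : (0:ℝ) < (i:ℝ) := by exact_mod_cast hi1
    have ht : 0 < (i:ℝ) * s := mul_pos hipos hs
    have hqi : q ^ i = Real.exp (-((i:ℝ) * s)) := by
      rw [hqdef, ← Real.exp_nat_mul]
      ring_nf
    have hg : gfun β ((i:ℝ)/((n:ℝ) - 1))
        = Real.log (1 - q ^ i) - Real.log (i:ℝ) - Real.log s := by
      rw [gfun_eq]
      have harg : β * ((i:ℝ)/((n:ℝ) - 1)) = (i:ℝ) * s := by rw [hsdef]; ring
      rw [harg, Hfun_eq ht, hqi, Real.log_mul hipos.ne' hs.ne']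
      ring
    have hqi1 : 0 < 1 - q ^ i := one_sub_exp_pos ht |>.trans_eq (by rw [hqi])
    have h1q : 0 < 1 - q := by linarith [exp_neg_lt_one hs]
    have hlhs : (q ^ i - 1) / ((q - 1) * (i:ℝ)) = (1 - q ^ i) / ((1 - q) * (i:ℝ)) := by
      rw [show q ^ i - 1 = -(1 - q ^ i) by ring, show (q-1) * (i:ℝ) = -((1-q) * (i:ℝ)) by ring,
        neg_div_neg_eq]
    rw [hlhs, Real.log_div hqi1.ne' (by positivity), Real.log_mul h1q.ne' hipos.ne', hg, hqdef]
    ring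
  have hconst : Real.log s - Real.log (1 - Real.exp (-s)) = -Hfun s := by
    rw [Hfun_eq hs]; ring
  rw [hneg, hlog, Finset.sum_congr rfl hterm, Finset.sum_add_distrib, Finset.sum_const,
    Nat.card_Icc]
  have hn0 : (n:ℝ) ≠ 0 := by linarith
  rw [hconst]
  rw [show (n + 1 - 1 : ℕ) = n from by omega]
  rw [nsmul_eq_mul]
  field_simp

open Filter in
/-- The limiting pressure of the Mallows model:
`lim_n (1/n) ln([n]_{q_n}!/n!) = ∫_0^1 ln((1-e^{-βx})/(βx)) dx`
with `q_n = e^{-β/(n-1)}`. -/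
theorem mallows_pressure_limit (β : ℝ) (hβ : 0 < β) :
    Tendsto (fun n : ℕ =>
        (1 / (n : ℝ)) * Real.log
          ((∏ i ∈ Finset.Icc 1 n,
            ((Real.exp (-β / ((n : ℝ) - 1))) ^ i - 1)
              / (Real.exp (-β / ((n : ℝ) - 1)) - 1)) / (Nat.factorial n : ℝ)))
      atTop
      (nhds (∫ x in (0:ℝ)..1, Real.log ((1 - Real.exp (-β * x)) / (β * x)))) := by
  have hmain := (aux_A hβ).add (aux_B hβ)
  rw [add_zero] at hmain
  have hInt : (∫ x in (0:ℝ)..1, Real.log ((1 - Real.exp (-β * x)) / (β * x)))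
      = ∫ x in (0:ℝ)..1, gfun β x := rfl
  rw [hInt]
  refine hmain.congr' ?_
  filter_upwards [eventually_ge_atTop 2] with n hn
  exact (decomp hβ n hn).symm
end

section
/- If β ≤ 0 or L₁L₂ < 1/β, then u(x,y) = (1 − βxy)^{−2} satisfies the integral equation ln u(x,y) = 2β ∫_0^x ∫_0^y u(x′,y′) dy′ dx′ for all (x,y) ∈ [0,L₁]×[0,L₂]. -/
open Set

/-- If `β ≤ 0` or `L₁L₂ < 1/β`, then `u(x,y) = (1-βxy)^{-2}` satisfies the
Liouville Cauchy integral equation on `[0,L₁]×[0,L₂]`. -/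
theorem liouville_integral_solution (β L₁ L₂ : ℝ) (hL₁ : 0 < L₁) (hL₂ : 0 < L₂)
    (h : β ≤ 0 ∨ L₁ * L₂ < 1 / β) :
    ∀ x ∈ Icc 0 L₁, ∀ y ∈ Icc 0 L₂,
      Real.log ((1 - β * x * y) ^ (-2 : ℤ))
        = 2 * β * ∫ x' in (0:ℝ)..x, ∫ y' in (0:ℝ)..y,
            (1 - β * x' * y') ^ (-2 : ℤ) := by
  have hpos : ∀ a ∈ Icc (0:ℝ) L₁, ∀ b ∈ Icc (0:ℝ) L₂, 0 < 1 - β * a * b := by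
    intro a ha b hb
    obtain ⟨ha0, ha1⟩ := ha
    obtain ⟨hb0, hb1⟩ := hb
    rcases le_or_gt β 0 with hβ | hβ
    · nlinarith [mul_nonneg ha0 hb0]
    · rcases h with h | h
      · linarith
      · have hab : a * b ≤ L₁ * L₂ := by nlinarith
        have : β * (a * b) < β * (1 / β) := by
          exact mul_lt_mul_of_pos_left (lt_of_le_of_lt hab h) hβ
        rw [mul_one_div_cancel (ne_of_gt hβ)] at this
        nlinarith
  intro x hx y hy
  -- inner integral computation
  have hinner : ∀ x' ∈ Icc (0:ℝ) L₁,
      (∫ y' in (0:ℝ)..y, (1 - β * x' * y') ^ (-2 : ℤ)) = y / (1 - β * x' * y) := by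
    intro x' hx'
    have hne : ∀ t ∈ uIcc (0:ℝ) y, 1 - β * x' * t ≠ 0 := by
      intro t ht
      rw [uIcc_of_le hy.1] at ht
      have : t ∈ Icc (0:ℝ) L₂ := ⟨ht.1, le_trans ht.2 hy.2⟩
      exact ne_of_gt (hpos x' hx' t this)
    have hderiv : ∀ t ∈ uIcc (0:ℝ) y,
        HasDerivAt (fun s => s / (1 - β * x' * s)) ((1 - β * x' * t) ^ (-2 : ℤ)) t := by
      intro t ht
      have h1 : HasDerivAt (fun s : ℝ => s) 1 t := hasDerivAt_id t
      have h2 : HasDerivAt (fun s : ℝ => 1 - β * x' * s) (-(β * x')) t := by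
        simpa using (((hasDerivAt_id t).const_mul (β * x')).const_sub (1:ℝ))
      have := h1.div h2 (hne t ht)
      refine this.congr_deriv ?_
      have h0 := hne t ht
      rw [zpow_neg, show ((2:ℤ)) = ((2:ℕ):ℤ) from rfl, zpow_natCast]
      field_simp
      ring
    have hcont : IntervalIntegrable (fun y' => (1 - β * x' * y') ^ (-2 : ℤ))
        MeasureTheory.volume 0 y := by
      apply ContinuousOn.intervalIntegrable
      apply ContinuousOn.zpow₀
      · fun_prop
      · intro t ht
        exact Or.inl (hne t ht)
    have := intervalIntegral.integral_eq_sub_of_hasDerivAt hderiv hcont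
    simpa using this
  have hxIcc : ∀ t ∈ uIcc (0:ℝ) x, t ∈ Icc (0:ℝ) L₁ := by
    intro t ht
    rw [uIcc_of_le hx.1] at ht
    exact ⟨ht.1, le_trans ht.2 hx.2⟩
  -- rewrite the double integral
  have hcongr : (∫ x' in (0:ℝ)..x, ∫ y' in (0:ℝ)..y, (1 - β * x' * y') ^ (-2 : ℤ))
      = ∫ x' in (0:ℝ)..x, y / (1 - β * x' * y) := by
    apply intervalIntegral.integral_congr
    intro t ht
    exact hinner t (hxIcc t ht)
  rw [hcongr]
  -- outer integral via FTC
  have hne' : ∀ t ∈ uIcc (0:ℝ) x, 1 - β * t * y ≠ 0 := fun t ht =>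
    ne_of_gt (hpos t (hxIcc t ht) y hy)
  have hderiv2 : ∀ t ∈ uIcc (0:ℝ) x,
      HasDerivAt (fun s => -2 * Real.log (1 - β * s * y)) (2 * β * (y / (1 - β * t * y))) t := by
    intro t ht
    have h2 : HasDerivAt (fun s : ℝ => 1 - β * s * y) (-(β * y)) t := by
      have : HasDerivAt (fun s : ℝ => β * s * y) (β * y) t := by
        simpa [mul_comm, mul_assoc, mul_left_comm] using
          ((hasDerivAt_id t).const_mul (β * y))
      simpa using (this.const_sub (1:ℝ))
    have hlog := (h2.log (hne' t ht)).const_mul (-2 : ℝ)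
    refine hlog.congr_deriv ?_
    have h0 := hne' t ht
    field_simp
  have hcont2 : IntervalIntegrable (fun t => 2 * β * (y / (1 - β * t * y)))
      MeasureTheory.volume 0 x := by
    apply ContinuousOn.intervalIntegrable
    apply ContinuousOn.mul continuousOn_const
    apply ContinuousOn.div continuousOn_const (by fun_prop) hne'
  have hout := intervalIntegral.integral_eq_sub_of_hasDerivAt hderiv2 hcont2
  rw [intervalIntegral.integral_const_mul] at hout
  have hxy : (0:ℝ) < 1 - β * x * y := hpos x hx y hy
  rw [hout]
  rw [Real.log_zpow]
  push_cast
  ring_nf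
  simp [Real.log_one]
end

section
/- For β ≠ 0, the function u(x,y) = αφ(x)ψ(y)/(α − βΦ(x)Ψ(y))², with φ(z) = ψ(z) = βe^{−βz}/(1 − e^{−β}), Φ(z) = Ψ(z) = (1 − e^{−βz})/(1 − e^{−β}), α = β/(1 − e^{−β}), equals (β/2)sinh(β/2) / (e^{β/4} cosh(β(x−y)/2) − e^{−β/4} cosh(β(x+y−1)/2))² for all (x,y) ∈ [0,1]². -/
noncomputable def phi (β z : ℝ) : ℝ := β * Real.exp (-β * z) / (1 - Real.exp (-β))

noncomputable def Phi (β z : ℝ) : ℝ := (1 - Real.exp (-β * z)) / (1 - Real.exp (-β))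

noncomputable def alpha (β : ℝ) : ℝ := β / (1 - Real.exp (-β))

/-- The explicit solution in the `α, φ, ψ, Φ, Ψ` form equals the
closed `sinh`/`cosh` formula on the unit square. -/
theorem mallows_density_formula (β : ℝ) (hβ : β ≠ 0) :
    ∀ x ∈ Set.Icc (0:ℝ) 1, ∀ y ∈ Set.Icc (0:ℝ) 1,
      alpha β * phi β x * phi β y / (alpha β - β * Phi β x * Phi β y) ^ 2
        = (β / 2) * Real.sinh (β / 2) /
            (Real.exp (β / 4) * Real.cosh (β * (x - y) / 2)
              - Real.exp (-β / 4) * Real.cosh (β * (x + y - 1) / 2)) ^ 2 := by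
  intro x _ y _
  have hQ : (1 : ℝ) - Real.exp (-β) ≠ 0 := by
    intro h
    have h1 : Real.exp (-β) = Real.exp 0 := by rw [Real.exp_zero]; linarith
    have h2 : -β = 0 := Real.exp_injective h1
    exact hβ (by linarith)
  have hE4 : Real.exp (β/4) ≠ 0 := (Real.exp_pos _).ne'
  have hEx : Real.exp (β*x/2) ≠ 0 := (Real.exp_pos _).ne'
  have hEy : Real.exp (β*y/2) ≠ 0 := (Real.exp_pos _).ne'
  have ex : Real.exp (-β * x) = 1 / Real.exp (β*x/2) ^ 2 := by
    rw [show -β * x = -(β*x/2 + β*x/2) by ring, Real.exp_neg, Real.exp_add]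
    field_simp
  have ey : Real.exp (-β * y) = 1 / Real.exp (β*y/2) ^ 2 := by
    rw [show -β * y = -(β*y/2 + β*y/2) by ring, Real.exp_neg, Real.exp_add]
    field_simp
  have eb : Real.exp (-β) = 1 / Real.exp (β/4) ^ 4 := by
    rw [show -β = -(β/4 + β/4 + (β/4 + β/4)) by ring, Real.exp_neg, Real.exp_add,
      Real.exp_add]
    field_simp
  have ehalf : Real.exp (β/2) = Real.exp (β/4) ^ 2 := by
    rw [show β/2 = β/4 + β/4 by ring, Real.exp_add]; ring
  have emhalf : Real.exp (-(β/2)) = 1 / Real.exp (β/4) ^ 2 := by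
    rw [Real.exp_neg, ehalf, one_div]
  have em4 : Real.exp (-β/4) = 1 / Real.exp (β/4) := by
    rw [show -β/4 = -(β/4) by ring, Real.exp_neg, one_div]
  have exy1 : Real.exp (β*(x-y)/2) = Real.exp (β*x/2) / Real.exp (β*y/2) := by
    rw [show β*(x-y)/2 = β*x/2 - β*y/2 by ring, Real.exp_sub]
  have exy2 : Real.exp (-(β*(x-y)/2)) = Real.exp (β*y/2) / Real.exp (β*x/2) := by
    rw [show -(β*(x-y)/2) = β*y/2 - β*x/2 by ring, Real.exp_sub]
  have exy3 : Real.exp (β*(x+y-1)/2)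
      = Real.exp (β*x/2) * Real.exp (β*y/2) / Real.exp (β/4) ^ 2 := by
    rw [show β*(x+y-1)/2 = β*x/2 + β*y/2 - (β/4 + β/4) by ring, Real.exp_sub,
      Real.exp_add, Real.exp_add]
    field_simp
  have exy4 : Real.exp (-(β*(x+y-1)/2))
      = Real.exp (β/4) ^ 2 / (Real.exp (β*x/2) * Real.exp (β*y/2)) := by
    rw [show -(β*(x+y-1)/2) = (β/4 + β/4) - (β*x/2 + β*y/2) by ring, Real.exp_sub,
      Real.exp_add, Real.exp_add]
    field_simp
  have hE1 : Real.exp (β/4) ^ 4 ≠ 1 := by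
    intro h
    apply hQ
    rw [eb, h]
    norm_num
  have hQ' : Real.exp (β/4) ^ 4 - 1 ≠ 0 := sub_ne_zero.mpr hE1
  set N : ℝ := Real.exp (-β*x) + Real.exp (-β*y) - Real.exp (-β)
      - Real.exp (-β*x) * Real.exp (-β*y) with hN
  have hD1 : alpha β - β * Phi β x * Phi β y = β * N / (1 - Real.exp (-β)) ^ 2 := by
    rw [hN]
    unfold alpha Phi
    field_simp
    ring
  have key1 : Real.exp (β / 4) * Real.cosh (β * (x - y) / 2)
      - Real.exp (-β / 4) * Real.cosh (β * (x + y - 1) / 2)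
      = Real.exp (β*x/2) * Real.exp (β*y/2) * Real.exp (β/4) * N / 2 := by
    rw [hN, Real.cosh_eq, Real.cosh_eq, exy1, exy2, exy3, exy4, em4, ex, ey, eb]
    field_simp
    ring
  rw [hD1, key1]
  rcases eq_or_ne N 0 with h0 | h0
  · rw [h0]
    simp
  · unfold alpha phi
    rw [Real.sinh_eq, ex, ey, eb, ehalf, emhalf]
    field_simp
end

section
/- Marginals of the limiting Mallows density: for β ≠ 0 and u(x,y) = (β/2)sinh(β/2)/(e^{β/4}cosh(β(x−y)/2) − e^{−β/4}cosh(β(x+y−1)/2))², one has ∫_0^1 u(x,y) dy = 1 for every x ∈ [0,1], and ∫_0^1 u(x,y) dx = 1 for every y ∈ [0,1]. -/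
/-- The limiting Mallows density. -/
noncomputable def uMain (β x y : ℝ) : ℝ :=
  (β / 2) * Real.sinh (β / 2) /
    (Real.exp (β / 4) * Real.cosh (β * (x - y) / 2)
      - Real.exp (-β / 4) * Real.cosh (β * (x + y - 1) / 2)) ^ 2

lemma denom_eq (β x y : ℝ) :
    Real.exp (β / 4) * Real.cosh (β * (x - y) / 2)
      - Real.exp (-β / 4) * Real.cosh (β * (x + y - 1) / 2)
    = ((Real.exp (β*(1-2*x)/4) - Real.exp (β*(2*x-3)/4))/2) * Real.exp (β*y/2)
      + ((Real.exp (β*(2*x+1)/4) - Real.exp (β*(1-2*x)/4))/2) * (Real.exp (β*y/2))⁻¹ := by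
  rw [Real.cosh_eq, Real.cosh_eq,
      show β*(x-y)/2 = β*x/2 - β*y/2 by ring,
      show β*(x+y-1)/2 = β*x/2 + β*y/2 - (β/4 + β/4) by ring,
      show β*(1-2*x)/4 = β/4 - β*x/2 by ring,
      show β*(2*x-3)/4 = β*x/2 - (β/4 + (β/4 + β/4)) by ring,
      show β*(2*x+1)/4 = β*x/2 + β/4 by ring,
      show (-β/4 : ℝ) = -(β/4) by ring]
  simp only [Real.exp_neg, Real.exp_sub, Real.exp_add]
  have hE := (Real.exp_pos (β/4)).ne'
  have hX := (Real.exp_pos (β*x/2)).ne'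
  have hY := (Real.exp_pos (β*y/2)).ne'
  field_simp
  ring

lemma deriv_alg (β c P Q Y : ℝ) (hβ : β ≠ 0) (hP : P ≠ 0) (hY : 0 < Y)
    (hD : P*Y + Q*Y⁻¹ ≠ 0) :
    c / (P*Y + Q*Y⁻¹)^2 = -c * (-(β*(P^2*(Y*Y*β))) / (β*(P^2*(Y*Y)+P*Q))^2) := by
  have hYne := hY.ne'
  have hA : β*(P^2*(Y*Y*β)) ≠ 0 := by positivity
  have hg : β*(P^2*(Y*Y)+P*Q) = (P*Y)*(β*(P*Y+Q*Y⁻¹)) := by field_simp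
  have hBB : ((P*Y)*(β*(P*Y+Q*Y⁻¹)))^2
      = (β*(P^2*(Y*Y*β))) * (P*Y+Q*Y⁻¹)^2 := by ring
  rw [hg, hBB]
  rw [show -(β*(P^2*(Y*Y*β))) = (β*(P^2*(Y*Y*β))) * (-1) by ring]
  rw [mul_div_mul_left _ _ hA]
  ring

lemma endpoint_alg (β c P Q R : ℝ) (hβ : β ≠ 0) (hP : P ≠ 0)
    (h0 : β*(P^2*1+P*Q) ≠ 0) (h1 : β*(P^2*R+P*Q) ≠ 0)
    (key : c * (R - 1) = β*(P+Q)*(P*R+Q)) :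
    -c * (β*(P^2*R+P*Q))⁻¹ - (-c * (β*(P^2*1+P*Q))⁻¹) = 1 := by
  have e1 : -c * (β*(P^2*R+P*Q))⁻¹ - (-c * (β*(P^2*1+P*Q))⁻¹)
      = c * ((β*(P^2*1+P*Q))⁻¹ - (β*(P^2*R+P*Q))⁻¹) := by ring
  rw [e1, inv_sub_inv h0 h1]
  rw [show c * ((β*(P^2*R+P*Q) - β*(P^2*1+P*Q)) / (β*(P^2*1+P*Q) * (β*(P^2*R+P*Q))))
      = (c * (R-1)) * (β*P^2) / (β*(P^2*1+P*Q) * (β*(P^2*R+P*Q))) by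
    rw [div_eq_mul_inv, div_eq_mul_inv]; ring]
  rw [key, div_eq_one_iff_eq (mul_ne_zero h0 h1)]
  ring

lemma key_concrete (β x : ℝ) :
    (β / 2 * Real.sinh (β / 2)) * (Real.exp β - 1)
    = β * (((Real.exp (β*(1-2*x)/4) - Real.exp (β*(2*x-3)/4))/2)
          + ((Real.exp (β*(2*x+1)/4) - Real.exp (β*(1-2*x)/4))/2))
        * (((Real.exp (β*(1-2*x)/4) - Real.exp (β*(2*x-3)/4))/2) * Real.exp β
          + ((Real.exp (β*(2*x+1)/4) - Real.exp (β*(1-2*x)/4))/2)) := by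
  have h1 : Real.exp β = Real.exp (β/4)*Real.exp (β/4)*(Real.exp (β/4)*Real.exp (β/4)) := by
    simp only [← Real.exp_add]; congr 1; ring
  have h2 : Real.exp (β/2) = Real.exp (β/4)*Real.exp (β/4) := by
    simp only [← Real.exp_add]; congr 1; ring
  rw [Real.sinh_eq,
      show β*(1-2*x)/4 = β/4 - β*x/2 by ring,
      show β*(2*x-3)/4 = β*x/2 - (β/4 + (β/4 + β/4)) by ring,
      show β*(2*x+1)/4 = β*x/2 + β/4 by ring,
      h1, Real.exp_neg, h2]
  simp only [Real.exp_sub, Real.exp_add]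
  have hE := (Real.exp_pos (β/4)).ne'
  have hX := (Real.exp_pos (β*x/2)).ne'
  field_simp
  ring

lemma marginal_eq_one (β : ℝ) (hβ : β ≠ 0) (x : ℝ) (hx0 : 0 ≤ x) (hx1 : x < 1) :
    ∫ y in (0:ℝ)..1, uMain β x y = 1 := by
  obtain ⟨c, hc⟩ : ∃ t : ℝ, t = β / 2 * Real.sinh (β / 2) := ⟨_, rfl⟩
  obtain ⟨P, hPdef⟩ : ∃ t : ℝ,
      t = (Real.exp (β*(1-2*x)/4) - Real.exp (β*(2*x-3)/4))/2 := ⟨_, rfl⟩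
  obtain ⟨Q, hQdef⟩ : ∃ t : ℝ,
      t = (Real.exp (β*(2*x+1)/4) - Real.exp (β*(1-2*x)/4))/2 := ⟨_, rfl⟩
  have hβP : 0 < β * P := by
    rcases lt_or_gt_of_ne hβ with hneg | hpos
    · have : Real.exp (β*(1-2*x)/4) < Real.exp (β*(2*x-3)/4) :=
        Real.exp_lt_exp.mpr (by nlinarith)
      rw [hPdef]; nlinarith
    · have : Real.exp (β*(2*x-3)/4) < Real.exp (β*(1-2*x)/4) :=
        Real.exp_lt_exp.mpr (by nlinarith)
      rw [hPdef]; nlinarith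
  have hβQ : 0 ≤ β * Q := by
    rcases lt_or_gt_of_ne hβ with hneg | hpos
    · have : Real.exp (β*(2*x+1)/4) ≤ Real.exp (β*(1-2*x)/4) :=
        Real.exp_le_exp.mpr (by nlinarith)
      rw [hQdef]; nlinarith
    · have : Real.exp (β*(1-2*x)/4) ≤ Real.exp (β*(2*x+1)/4) :=
        Real.exp_le_exp.mpr (by nlinarith)
      rw [hQdef]; nlinarith
  have hP : P ≠ 0 := by
    intro h; rw [h, mul_zero] at hβP; exact lt_irrefl 0 hβP
  have hD : ∀ y : ℝ, P * Real.exp (β*y/2) + Q * (Real.exp (β*y/2))⁻¹ ≠ 0 := by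
    intro y
    have hY := Real.exp_pos (β*y/2)
    have hYi := inv_pos.mpr hY
    have h1 : 0 < β * P * Real.exp (β*y/2) := by
      rcases lt_or_gt_of_ne hβ with h | h <;> nlinarith
    have h2 : 0 ≤ β * Q * (Real.exp (β*y/2))⁻¹ := mul_nonneg hβQ hYi.le
    intro h0
    have : β * (P * Real.exp (β*y/2) + Q * (Real.exp (β*y/2))⁻¹) = 0 := by
      rw [h0, mul_zero]
    nlinarith
  have hu : (fun y : ℝ => uMain β x y)
      = fun y => c / (P * Real.exp (β*y/2) + Q * (Real.exp (β*y/2))⁻¹) ^ 2 := by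
    funext y
    rw [uMain, denom_eq β x y, ← hPdef, ← hQdef, ← hc]
  have hgne : ∀ y : ℝ, β * (P^2 * Real.exp (β*y) + P*Q) ≠ 0 := by
    intro y
    have hY := (Real.exp_pos (β*y/2)).ne'
    have hsq : Real.exp (β*y) = Real.exp (β*y/2) * Real.exp (β*y/2) := by
      rw [← Real.exp_add]; congr 1; ring
    have factored : β * (P^2 * Real.exp (β*y) + P*Q)
        = (P * Real.exp (β*y/2)) * (β * (P * Real.exp (β*y/2) + Q * (Real.exp (β*y/2))⁻¹)) := by
      rw [hsq]; field_simp
    rw [factored]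
    exact mul_ne_zero (mul_ne_zero hP hY) (mul_ne_zero hβ (hD y))
  set F : ℝ → ℝ := fun y => -c * (β * (P^2 * Real.exp (β*y) + P*Q))⁻¹ with hF
  have hderiv : ∀ y ∈ Set.uIcc (0:ℝ) 1, HasDerivAt F (uMain β x y) y := by
    intro y _
    have h1 : HasDerivAt (fun y : ℝ => β * y) β y := by
      simpa using (hasDerivAt_id y).const_mul β
    have h2 : HasDerivAt (fun y : ℝ => Real.exp (β * y)) (Real.exp (β*y) * β) y :=
      (Real.hasDerivAt_exp (β*y)).comp y h1
    have h3 : HasDerivAt (fun y : ℝ => β * (P^2 * Real.exp (β*y) + P*Q))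
        (β * (P^2 * (Real.exp (β*y) * β))) y :=
      ((h2.const_mul (P^2)).add_const (P*Q)).const_mul β
    have h4 := (h3.inv (hgne y)).const_mul (-c)
    refine h4.congr_deriv (Eq.symm ?_)
    have hsq : Real.exp (β*y) = Real.exp (β*y/2) * Real.exp (β*y/2) := by
      rw [← Real.exp_add]; congr 1; ring
    rw [show uMain β x y = c / (P * Real.exp (β*y/2) + Q * (Real.exp (β*y/2))⁻¹) ^ 2 from
        congrFun hu y, hsq]
    exact deriv_alg β c P Q (Real.exp (β*y/2)) hβ hP (Real.exp_pos _) (hD y)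
  have hcY : Continuous fun y : ℝ => Real.exp (β*y/2) := by
    have h : Continuous fun y : ℝ => β*y/2 := (continuous_const.mul continuous_id).div_const 2
    exact Real.continuous_exp.comp h
  have hcont : Continuous fun y : ℝ =>
      c / (P * Real.exp (β*y/2) + Q * (Real.exp (β*y/2))⁻¹) ^ 2 := by
    apply continuous_const.div
    · exact ((continuous_const.mul hcY).add
        (continuous_const.mul (hcY.inv₀ (fun y => (Real.exp_pos _).ne')))).pow 2
    · intro y
      exact pow_ne_zero 2 (hD y)
  have hint : IntervalIntegrable (fun y => uMain β x y) MeasureTheory.volume 0 1 := by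
    rw [hu]; exact hcont.intervalIntegrable 0 1
  rw [intervalIntegral.integral_eq_sub_of_hasDerivAt hderiv hint, hF]
  simp only [mul_one, mul_zero, Real.exp_zero]
  have key : c * (Real.exp β - 1) = β*(P+Q)*(P*Real.exp β + Q) := by
    rw [hc, hPdef, hQdef]; exact key_concrete β x
  have h0 := hgne 0
  have h1 := hgne 1
  rw [mul_zero, Real.exp_zero] at h0
  rw [mul_one] at h1
  have := endpoint_alg β c P Q (Real.exp β) hβ hP (by simpa using h0) h1 key
  simpa using this

lemma uMain_one (β y : ℝ) : uMain β 1 y = uMain β 0 (1-y) := by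
  unfold uMain
  rw [show β*(0-(1-y))/2 = -(β*(1-y)/2) by ring,
      show β*(0+(1-y)-1)/2 = -(β*y/2) by ring,
      Real.cosh_neg, Real.cosh_neg,
      show β*(1+y-1)/2 = β*y/2 by ring]

lemma uMain_symm (β x y : ℝ) : uMain β x y = uMain β y x := by
  unfold uMain
  rw [show β*(y-x)/2 = -(β*(x-y)/2) by ring, Real.cosh_neg,
      show β*(y+x-1)/2 = β*(x+y-1)/2 by ring]

lemma marginal_all (β : ℝ) (hβ : β ≠ 0) (x : ℝ) (hx : x ∈ Set.Icc (0:ℝ) 1) :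
    ∫ y in (0:ℝ)..1, uMain β x y = 1 := by
  rcases eq_or_lt_of_le hx.2 with h1 | h1
  · rw [h1]
    simp only [uMain_one]
    have := intervalIntegral.integral_comp_sub_left (a := (0:ℝ)) (b := 1)
      (fun z => uMain β 0 z) 1
    simp only [sub_zero, sub_self] at this
    rw [this]
    exact marginal_eq_one β hβ 0 le_rfl zero_lt_one
  · exact marginal_eq_one β hβ x hx.1 h1

/-- Both marginals of the limiting Mallows density are uniform on `[0,1]`. -/
theorem mallows_density_marginals (β : ℝ) (hβ : β ≠ 0) :
    (∀ x ∈ Set.Icc (0:ℝ) 1, ∫ y in (0:ℝ)..1, uMain β x y = 1) ∧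
    (∀ y ∈ Set.Icc (0:ℝ) 1, ∫ x in (0:ℝ)..1, uMain β x y = 1) := by
  constructor
  · exact fun x hx => marginal_all β hβ x hx
  · intro y hy
    simp only [fun x => uMain_symm β x y]
    exact marginal_all β hβ y hy
end

section
/- Sharp interface limit: for fixed 0 < y < 1 and t ∈ ℝ, with x = x(β) = y + t/β, the density profile ρ(x;y) = (1 − e^{−βy})e^{−βx} / ((1 − e^{−β}) − (1 − e^{−βx})(1 − e^{−βy})) converges to 1/(1 + e^t) as β → ∞. -/
open Filter

/-- Sharp interface limit: along `x = y + t/β` the blocking-measure density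
profile converges to the Fermi profile `1/(1+e^t)` as `β → ∞`. -/
theorem sharp_interface_limit (y t : ℝ) (hy : 0 < y) (hy1 : y < 1) :
    Tendsto (fun β : ℝ =>
        (1 - Real.exp (-β * y)) * Real.exp (-β * (y + t / β)) /
          ((1 - Real.exp (-β))
            - (1 - Real.exp (-β * (y + t / β))) * (1 - Real.exp (-β * y))))
      atTop (nhds (1 / (1 + Real.exp t))) := by
  have hA : Tendsto (fun β : ℝ => Real.exp (-β * y)) atTop (nhds 0) := by
    apply Real.tendsto_exp_atBot.comp
    simp only [neg_mul]
    exact tendsto_neg_atTop_atBot.comp (Tendsto.atTop_mul_const hy tendsto_id)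
  have hB : Tendsto (fun β : ℝ => Real.exp (-β * (1 - y))) atTop (nhds 0) := by
    apply Real.tendsto_exp_atBot.comp
    simp only [neg_mul]
    exact tendsto_neg_atTop_atBot.comp
      (Tendsto.atTop_mul_const (by linarith) tendsto_id)
  have hden : (0:ℝ) < 1 + Real.exp (-t) := by positivity
  have hf : Tendsto (fun β : ℝ =>
      ((1 - Real.exp (-β * y)) * Real.exp (-t)) /
        ((1 + Real.exp (-t) - Real.exp (-β * y) * Real.exp (-t))
          - Real.exp (-β * (1 - y))))
      atTop (nhds (Real.exp (-t) / (1 + Real.exp (-t)))) := by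
    have hnum : Tendsto (fun β : ℝ => (1 - Real.exp (-β * y)) * Real.exp (-t))
        atTop (nhds ((1 - 0) * Real.exp (-t))) :=
      ((tendsto_const_nhds.sub hA).mul tendsto_const_nhds)
    have hd : Tendsto (fun β : ℝ =>
        (1 + Real.exp (-t) - Real.exp (-β * y) * Real.exp (-t))
          - Real.exp (-β * (1 - y)))
        atTop (nhds ((1 + Real.exp (-t) - 0 * Real.exp (-t)) - 0)) :=
      (tendsto_const_nhds.sub (hA.mul tendsto_const_nhds)).sub hB
    have := hnum.div hd (by simpa using hden.ne')
    simp only [sub_zero, zero_mul, one_mul] at this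
    exact this
  have heq : ∀ᶠ β : ℝ in atTop,
      ((1 - Real.exp (-β * y)) * Real.exp (-t)) /
        ((1 + Real.exp (-t) - Real.exp (-β * y) * Real.exp (-t))
          - Real.exp (-β * (1 - y)))
      = (1 - Real.exp (-β * y)) * Real.exp (-β * (y + t / β)) /
          ((1 - Real.exp (-β))
            - (1 - Real.exp (-β * (y + t / β))) * (1 - Real.exp (-β * y))) := by
    filter_upwards [eventually_gt_atTop (0:ℝ)] with β hβ
    have hβ0 : β ≠ 0 := hβ.ne'
    have hx : -β * (y + t / β) = -β * y + -t := by field_simp; ring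
    have ha : Real.exp (-β * y) ≠ 0 := (Real.exp_pos _).ne'
    have h1 : (1 - Real.exp (-β * y)) * Real.exp (-β * (y + t / β))
        = Real.exp (-β * y) * ((1 - Real.exp (-β * y)) * Real.exp (-t)) := by
      rw [hx, Real.exp_add]; ring
    have hE : Real.exp (-β) = Real.exp (-β * y) * Real.exp (-β * (1 - y)) := by
      rw [← Real.exp_add]; ring_nf
    have h2 : ((1 - Real.exp (-β))
        - (1 - Real.exp (-β * (y + t / β))) * (1 - Real.exp (-β * y)))
        = Real.exp (-β * y) *
          ((1 + Real.exp (-t) - Real.exp (-β * y) * Real.exp (-t))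
            - Real.exp (-β * (1 - y))) := by
      rw [hx, Real.exp_add, hE]; ring
    rw [h1, h2, mul_div_mul_left _ _ ha]
  exact Tendsto.congr' heq (by
    have : Real.exp (-t) / (1 + Real.exp (-t)) = 1 / (1 + Real.exp t) := by
      rw [Real.exp_neg, div_eq_div_iff (by positivity) (by positivity)]
      field_simp
      ring
    rwa [this] at hf)
end
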